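/- arXiv:2110.12206 — 4 statements merged into one kernel-verified Lean document; each statement's English description precedes it below -/
import Mathlib

section
/- If a, b, c, d are complex numbers of modulus one and a + b + c + d = 0, then a = -b or a = -c or a = -d. -/
theorem stmt_1 (a b c d : ℂ) (ha : ‖a‖ = 1) (hb : ‖b‖ = 1)
    (hc : ‖c‖ = 1) (hd : ‖d‖ = 1)
    (h : a + b + c + d = 0) : a = -b ∨ a = -c ∨ a = -d := by
  have ha0 : a ≠ 0 := by intro h0; simp [h0] at ha
  have hb0 : b ≠ 0 := by intro h0; simp [h0] at hb
  have hc0 : c ≠ 0 := by intro h0; simp [h0] at hc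
  have hd0 : d ≠ 0 := by intro h0; simp [h0] at hd
  have conjinv : ∀ z : ℂ, ‖z‖ = 1 → (starRingEnd ℂ) z = z⁻¹ := by
    intro z hz
    have hz0 : z ≠ 0 := by intro h0; simp [h0] at hz
    field_simp
    rw [mul_comm, Complex.mul_conj, Complex.normSq_eq_norm_sq, hz]
    norm_num
  have h2 : a⁻¹ + b⁻¹ + c⁻¹ + d⁻¹ = 0 := by
    have := congrArg (starRingEnd ℂ) h
    simpa [conjinv a ha, conjinv b hb, conjinv c hc, conjinv d hd] using this
  have h3 : b*c*d + a*c*d + a*b*d + a*b*c = 0 := by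
    field_simp at h2
    linear_combination h2
  have key : (a + b) * ((a + c) * (a + d)) = 0 := by
    linear_combination a^2 * h + h3
  rcases mul_eq_zero.1 key with h4 | h4
  · left; exact add_eq_zero_iff_eq_neg.1 h4
  · rcases mul_eq_zero.1 h4 with h5 | h5
    · right; left; exact add_eq_zero_iff_eq_neg.1 h5
    · right; right; exact add_eq_zero_iff_eq_neg.1 h5
end

section
/- Let ω = e^{2πi/3} and g₁,...,g₆ ∈ {1, ω, ω²}. Suppose k is a complex number of modulus one with g₁ + g₂ + g₃ + k(g₄ + g₅ + g₆) = 0. If not all of g₁, g₂, g₃ are equal and g₁ + g₂ + g₃ ≠ 0, then k ∈ {1, ω, ω², -1, -ω, -ω²}. -/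
set_option maxHeartbeats 2000000 in
theorem stmt_2 (ω g₁ g₂ g₃ g₄ g₅ g₆ k : ℂ)
    (hω : ω = Complex.exp (2 * Real.pi * Complex.I / 3))
    (h1 : g₁ ∈ ({1, ω, ω ^ 2} : Set ℂ)) (h2 : g₂ ∈ ({1, ω, ω ^ 2} : Set ℂ))
    (h3 : g₃ ∈ ({1, ω, ω ^ 2} : Set ℂ)) (h4 : g₄ ∈ ({1, ω, ω ^ 2} : Set ℂ))
    (h5 : g₅ ∈ ({1, ω, ω ^ 2} : Set ℂ)) (h6 : g₆ ∈ ({1, ω, ω ^ 2} : Set ℂ))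
    (hk : ‖k‖ = 1)
    (heq : g₁ + g₂ + g₃ + k * (g₄ + g₅ + g₆) = 0)
    (hne : ¬(g₁ = g₂ ∧ g₂ = g₃))
    (hsum : g₁ + g₂ + g₃ ≠ 0) :
    k ∈ ({1, ω, ω ^ 2, -1, -ω, -ω ^ 2} : Set ℂ) := by
  have hco : Real.cos (2*Real.pi/3) = -1/2 := by
    rw [show 2*Real.pi/3 = Real.pi - Real.pi/3 by ring, Real.cos_pi_sub, Real.cos_pi_div_three]
    norm_num
  have hsi : Real.sin (2*Real.pi/3) = Real.sqrt 3 / 2 := by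
    rw [show 2*Real.pi/3 = Real.pi - Real.pi/3 by ring, Real.sin_pi_sub, Real.sin_pi_div_three]
  have hrw : ω = Complex.exp (((2*Real.pi/3 : ℝ):ℂ) * Complex.I) := by
    rw [hω]; congr 1; push_cast; ring
  have hre : ω.re = -1/2 := by
    rw [hrw, Complex.exp_mul_I]
    simp only [Complex.add_re, Complex.mul_re, Complex.I_re, Complex.I_im,
      Complex.cos_ofReal_re, Complex.cos_ofReal_im, Complex.sin_ofReal_re,
      Complex.sin_ofReal_im, hco, hsi]
    ring
  have him : ω.im = Real.sqrt 3 / 2 := by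
    rw [hrw, Complex.exp_mul_I]
    simp only [Complex.add_im, Complex.mul_im, Complex.I_re, Complex.I_im,
      Complex.cos_ofReal_re, Complex.cos_ofReal_im, Complex.sin_ofReal_re,
      Complex.sin_ofReal_im, hco, hsi]
    ring
  have him2 : ω.im ^ 2 = 3/4 := by
    rw [him, div_pow, Real.sq_sqrt (by norm_num : (3:ℝ) ≥ 0)]; norm_num
  have hs3 : Real.sqrt 3 > 0 := Real.sqrt_pos.mpr (by norm_num)
  have hωne1 : ω ≠ 1 := by
    intro h; have := congrArg Complex.re h; rw [hre] at this
    simp only [Complex.one_re] at this; norm_num at this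
  have hω3 : ω ^ 3 = 1 := by
    rw [hω, ← Complex.exp_nat_mul]
    rw [show ((3:ℕ):ℂ) * (2 * Real.pi * Complex.I / 3) = 2 * Real.pi * Complex.I by
      push_cast; ring]
    exact Complex.exp_two_pi_mul_I
  have hω2 : ω ^ 2 = -1 - ω := by
    have h0 : (ω - 1) * (ω ^ 2 + ω + 1) = 0 := by linear_combination hω3
    rcases mul_eq_zero.mp h0 with h | h
    · exact absurd (sub_eq_zero.mp h) hωne1
    · linear_combination h
  have mem3 : ∀ g : ℂ, g ∈ ({1, ω, ω ^ 2} : Set ℂ) → g = 1 ∨ g = ω ∨ g = -1 - ω := by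
    intro g hg
    rcases hg with h | h | h
    · exact Or.inl h
    · exact Or.inr (Or.inl h)
    · exact Or.inr (Or.inr (by rw [Set.mem_singleton_iff] at h; rw [h, hω2]))
  have hg1 := mem3 g₁ h1; have hg2 := mem3 g₂ h2; have hg3 := mem3 g₃ h3
  have hg4 := mem3 g₄ h4; have hg5 := mem3 g₅ h5; have hg6 := mem3 g₆ h6
  have hz1 : (1 - ω : ℂ) ≠ 0 := sub_ne_zero.mpr (Ne.symm hωne1)
  have hz2 : (-(1 - ω) : ℂ) ≠ 0 := neg_ne_zero.mpr hz1
  have hz3 : (1 + 2*ω : ℂ) ≠ 0 := by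
    intro h; have := congrArg Complex.im h
    simp only [Complex.add_im, Complex.mul_im, Complex.one_im, Complex.re_ofNat,
      Complex.im_ofNat, Complex.zero_im, him] at this
    nlinarith
  have hz4 : (-(1 + 2*ω) : ℂ) ≠ 0 := neg_ne_zero.mpr hz3
  have hz5 : (2 + ω : ℂ) ≠ 0 := by
    intro h; have := congrArg Complex.re h
    simp only [Complex.add_re, Complex.re_ofNat, Complex.zero_re, hre] at this
    norm_num at this
  have hz6 : (-(2 + ω) : ℂ) ≠ 0 := neg_ne_zero.mpr hz5
  have hS1 : g₁ + g₂ + g₃ = 1 - ω ∨ g₁ + g₂ + g₃ = -(1 - ω) ∨ g₁ + g₂ + g₃ = 1 + 2*ω ∨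
      g₁ + g₂ + g₃ = -(1 + 2*ω) ∨ g₁ + g₂ + g₃ = 2 + ω ∨ g₁ + g₂ + g₃ = -(2 + ω) := by
    clear heq
    rcases hg1 with rfl|rfl|rfl <;> rcases hg2 with rfl|rfl|rfl <;> rcases hg3 with rfl|rfl|rfl <;>
      first
      | (exfalso; apply hne; constructor <;> ring1)
      | (exact absurd (by ring1) hsum)
      | (left; ring1)
      | (right; left; ring1)
      | (right; right; left; ring1)
      | (right; right; right; left; ring1)
      | (right; right; right; right; left; ring1)
      | (right; right; right; right; right; ring1)
  have hS2 : g₄ + g₅ + g₆ = 0 ∨ g₄ + g₅ + g₆ = 3 ∨ g₄ + g₅ + g₆ = 3*ω ∨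
      g₄ + g₅ + g₆ = -3 - 3*ω ∨
      (g₄ + g₅ + g₆ = 1 - ω ∨ g₄ + g₅ + g₆ = -(1 - ω) ∨ g₄ + g₅ + g₆ = 1 + 2*ω ∨
      g₄ + g₅ + g₆ = -(1 + 2*ω) ∨ g₄ + g₅ + g₆ = 2 + ω ∨ g₄ + g₅ + g₆ = -(2 + ω)) := by
    clear heq
    rcases hg4 with rfl|rfl|rfl <;> rcases hg5 with rfl|rfl|rfl <;> rcases hg6 with rfl|rfl|rfl <;>
      first
      | (left; ring1)
      | (right; left; ring1)
      | (right; right; left; ring1)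
      | (right; right; right; left; ring1)
      | (right; right; right; right; left; ring1)
      | (right; right; right; right; right; left; ring1)
      | (right; right; right; right; right; right; left; ring1)
      | (right; right; right; right; right; right; right; left; ring1)
      | (right; right; right; right; right; right; right; right; left; ring1)
      | (right; right; right; right; right; right; right; right; right; ring1)
  have habs : Complex.normSq (g₁ + g₂ + g₃) = Complex.normSq (g₄ + g₅ + g₆) := by
    have h2' : g₁ + g₂ + g₃ = -(k * (g₄ + g₅ + g₆)) := by linear_combination heq
    rw [← Complex.sq_norm, ← Complex.sq_norm, h2', norm_neg, norm_mul, hk, one_mul]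
  rcases hS2 with hB | hB | hB | hB | hB
  · exact absurd (by linear_combination heq - k * hB) hsum
  case _ | _ | _ =>
    exfalso
    rw [hB] at habs
    rcases hS1 with hA | hA | hA | hA | hA | hA <;> rw [hA] at habs <;>
      simp only [Complex.normSq_apply, Complex.add_re, Complex.add_im, Complex.sub_re,
        Complex.sub_im, Complex.neg_re, Complex.neg_im, Complex.mul_re, Complex.mul_im,
        Complex.one_re, Complex.one_im, Complex.re_ofNat, Complex.im_ofNat, hre] at habs <;>
      nlinarith [him2, hs3]
  · simp only [Set.mem_insert_iff, Set.mem_singleton_iff, hω2]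
    rcases hB with hB|hB|hB|hB|hB|hB <;>
    (have hnz : g₄ + g₅ + g₆ ≠ 0 := by
        rw [hB]
        first | exact hz1 | exact hz2 | exact hz3 | exact hz4 | exact hz5 | exact hz6) <;>
    rcases hS1 with hA|hA|hA|hA|hA|hA <;>
    first
      | (left; exact mul_right_cancel₀ hnz
          (by first
            | linear_combination heq - hA - ((1:ℂ))*hB
            | linear_combination heq - hA - ((1:ℂ))*hB + hω2
            | linear_combination heq - hA - ((1:ℂ))*hB - hω2
            | linear_combination heq - hA - ((1:ℂ))*hB + 2*hω2
            | linear_combination heq - hA - ((1:ℂ))*hB - 2*hω2))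
      | (right; left; exact mul_right_cancel₀ hnz
          (by first
            | linear_combination heq - hA - (ω)*hB
            | linear_combination heq - hA - (ω)*hB + hω2
            | linear_combination heq - hA - (ω)*hB - hω2
            | linear_combination heq - hA - (ω)*hB + 2*hω2
            | linear_combination heq - hA - (ω)*hB - 2*hω2))
      | (right; right; left; exact mul_right_cancel₀ hnz
          (by first
            | linear_combination heq - hA - ((-1-ω))*hB
            | linear_combination heq - hA - ((-1-ω))*hB + hω2
            | linear_combination heq - hA - ((-1-ω))*hB - hω2
            | linear_combination heq - hA - ((-1-ω))*hB + 2*hω2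
            | linear_combination heq - hA - ((-1-ω))*hB - 2*hω2))
      | (right; right; right; left; exact mul_right_cancel₀ hnz
          (by first
            | linear_combination heq - hA - ((-1:ℂ))*hB
            | linear_combination heq - hA - ((-1:ℂ))*hB + hω2
            | linear_combination heq - hA - ((-1:ℂ))*hB - hω2
            | linear_combination heq - hA - ((-1:ℂ))*hB + 2*hω2
            | linear_combination heq - hA - ((-1:ℂ))*hB - 2*hω2))
      | (right; right; right; right; left; exact mul_right_cancel₀ hnz
          (by first
            | linear_combination heq - hA - ((-ω))*hB
            | linear_combination heq - hA - ((-ω))*hB + hω2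
            | linear_combination heq - hA - ((-ω))*hB - hω2
            | linear_combination heq - hA - ((-ω))*hB + 2*hω2
            | linear_combination heq - hA - ((-ω))*hB - 2*hω2))
      | (right; right; right; right; right; exact mul_right_cancel₀ hnz
          (by first
            | linear_combination heq - hA - ((1+ω))*hB
            | linear_combination heq - hA - ((1+ω))*hB + hω2
            | linear_combination heq - hA - ((1+ω))*hB - hω2
            | linear_combination heq - hA - ((1+ω))*hB + 2*hω2
            | linear_combination heq - hA - ((1+ω))*hB - 2*hω2))
end

section
/- There is no 6×6 matrix H with all entries of modulus one such that H·H* = 6·I (i.e., H/√6 is unitary) and H has exactly two distinct entries. -/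
open scoped Classical
open Finset

noncomputable def Qc (x y : ℂ) (u v : Fin 6 → ℂ) : ℕ :=
  (Finset.univ.filter fun k => u k = x ∧ v k = y).card

noncomputable def Ec (u v : Fin 6 → ℂ) : ℕ :=
  (Finset.univ.filter fun k => u k = v k).card

noncomputable def Wc (b : ℂ) (u : Fin 6 → ℂ) : ℕ :=
  (Finset.univ.filter fun k => u k = b).card

lemma sum_split (a b : ℂ) (ha : ‖a‖ = 1) (hb : ‖b‖ = 1) (hab : a ≠ b)
    (u v : Fin 6 → ℂ) (hu : ∀ k, u k = a ∨ u k = b) (hv : ∀ k, v k = a ∨ v k = b) :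
    ∑ k, u k * (starRingEnd ℂ) (v k) =
      ((Finset.univ.filter fun k => u k = v k).card : ℂ)
      + ((Finset.univ.filter fun k => u k = a ∧ v k = b).card : ℂ) * (a * (starRingEnd ℂ) b)
      + ((Finset.univ.filter fun k => u k = b ∧ v k = a).card : ℂ) * (b * (starRingEnd ℂ) a) := by
  have key : ∀ k, u k * (starRingEnd ℂ) (v k) =
      (if u k = v k then 1 else 0)
      + (if u k = a ∧ v k = b then 1 else 0) * (a * (starRingEnd ℂ) b)
      + (if u k = b ∧ v k = a then 1 else 0) * (b * (starRingEnd ℂ) a) := by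
    intro k
    rcases hu k with h | h <;> rcases hv k with h' | h' <;>
      simp [h, h', hab, Ne.symm hab, Complex.mul_conj, Complex.normSq_eq_norm_sq, ha, hb]
  rw [Finset.sum_congr rfl (fun k _ => key k)]
  rw [Finset.sum_add_distrib, Finset.sum_add_distrib, ← Finset.sum_mul, ← Finset.sum_mul]
  simp [Finset.sum_boole]

lemma pair (a b : ℂ) (ha : ‖a‖ = 1) (hb : ‖b‖ = 1) (hab : a ≠ b)
    (u v : Fin 6 → ℂ) (hu : ∀ k, u k = a ∨ u k = b) (hv : ∀ k, v k = a ∨ v k = b)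
    (h0 : ∑ k, u k * (starRingEnd ℂ) (v k) = 0) :
    Ec u v + Qc a b u v + Qc b a u v = 6 ∧
    (Ec u v : ℝ) + ((Qc a b u v : ℝ) + (Qc b a u v : ℝ)) * (a * (starRingEnd ℂ) b).re = 0 ∧
    ((Qc a b u v : ℝ) - (Qc b a u v : ℝ)) * (a * (starRingEnd ℂ) b).im = 0 := by
  have heq := (sum_split a b ha hb hab u v hu hv).symm.trans h0
  unfold Ec Qc
  constructor
  · have hpart : ∀ k, ((if u k = v k then 1 else 0) : ℕ)
        + (if u k = a ∧ v k = b then 1 else 0) + (if u k = b ∧ v k = a then 1 else 0) = 1 := by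
      intro k
      rcases hu k with h | h <;> rcases hv k with h' | h' <;>
        simp [h, h', hab, Ne.symm hab]
    rw [Finset.card_filter, Finset.card_filter, Finset.card_filter,
      ← Finset.sum_add_distrib, ← Finset.sum_add_distrib]
    rw [Finset.sum_congr rfl (fun k _ => hpart k)]
    simp
  constructor
  · have := congrArg Complex.re heq
    simp [Complex.add_re, Complex.mul_re] at this
    simp only [Complex.mul_re, Complex.conj_re, Complex.conj_im]
    nlinarith [this]
  · have := congrArg Complex.im heq
    simp [Complex.add_im, Complex.mul_im] at this
    simp only [Complex.mul_im, Complex.conj_re, Complex.conj_im]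
    nlinarith [this]


noncomputable def Sc (b : ℂ) (u v : Fin 6 → ℂ) : ℕ :=
  (Finset.univ.filter fun k => u k = b ∧ v k = b).card

lemma Qc_symm (x y : ℂ) (u v : Fin 6 → ℂ) : Qc x y u v = Qc y x v u := by
  unfold Qc
  congr 1
  apply Finset.filter_congr
  intro k _
  exact and_comm

lemma Sc_symm (b : ℂ) (u v : Fin 6 → ℂ) : Sc b u v = Sc b v u := by
  unfold Sc
  congr 1
  apply Finset.filter_congr
  intro k _
  exact and_comm

lemma Sc_self (b : ℂ) (u : Fin 6 → ℂ) : Sc b u u = Wc b u := by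
  unfold Sc Wc
  congr 1
  apply Finset.filter_congr
  intro k _
  simp

lemma weight_split (a b : ℂ) (hab : a ≠ b) (u v : Fin 6 → ℂ)
    (hv : ∀ k, v k = a ∨ v k = b) :
    Wc b u = Sc b u v + Qc b a u v := by
  unfold Wc Sc Qc
  rw [Finset.card_filter, Finset.card_filter, Finset.card_filter, ← Finset.sum_add_distrib]
  apply Finset.sum_congr rfl
  intro k _
  rcases hv k with h | h <;> simp [h, hab, Ne.symm hab]

lemma Sc_ind (b : ℂ) (u v : Fin 6 → ℂ) :
    Sc b u v = ∑ k, (if u k = b then 1 else 0) * (if v k = b then 1 else 0) := by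
  unfold Sc
  rw [Finset.card_filter]
  apply Finset.sum_congr rfl
  intro k _
  by_cases h1 : u k = b <;> by_cases h2 : v k = b <;> simp [h1, h2]

lemma Wc_ind (b : ℂ) (u : Fin 6 → ℂ) :
    Wc b u = ∑ k, (if u k = b then 1 else 0) := by
  unfold Wc
  rw [Finset.card_filter]

lemma key (H : Matrix (Fin 6) (Fin 6) ℂ) (a b : ℂ)
    (ha : ‖a‖ = 1) (hb : ‖b‖ = 1) (hab : a ≠ b)
    (hmem : ∀ i j, H i j = a ∨ H i j = b)
    (hrow : ∀ i j, i ≠ j → ∑ k, H i k * (starRingEnd ℂ) (H j k) = 0)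
    (hcol : ∀ k l, k ≠ l → ∑ i, H i l * (starRingEnd ℂ) (H i k) = 0) : False := by
  set z := a * (starRingEnd ℂ) b with hz
  -- |z| = 1
  have hzabs : ‖z‖ = 1 := by
    simp [hz, map_mul, ha, hb]
  have hzsq : z.re ^ 2 + z.im ^ 2 = 1 := by
    have := Complex.normSq_eq_norm_sq z
    rw [hzabs] at this
    simpa [Complex.normSq_apply, sq] using this
  -- z ≠ 1, hence z.re < 1
  have hzne : z ≠ 1 := by
    intro h
    apply hab
    have hb0 : (starRingEnd ℂ) b * b = 1 := by
      rw [mul_comm, Complex.mul_conj, Complex.normSq_eq_norm_sq, hb]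
      norm_num
    calc a = a * ((starRingEnd ℂ) b * b) := by rw [hb0, mul_one]
    _ = z * b := by rw [hz, mul_assoc]
    _ = b := by rw [h, one_mul]
  have hrelt : z.re < 1 := by
    rcases lt_or_ge z.re 1 with h | h
    · exact h
    · exfalso
      have h1 : z.re = 1 := by nlinarith
      have h2 : z.im = 0 := by nlinarith
      exact hzne (Complex.ext h1 h2)
  -- rows and columns as vectors
  have hrmem : ∀ i, ∀ k, H i k = a ∨ H i k = b := fun i k => hmem i k
  -- pair facts for all orthogonal pairs
  have hrowp : ∀ i j, i ≠ j →
      Ec (H i) (H j) + Qc a b (H i) (H j) + Qc b a (H i) (H j) = 6 ∧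
      (Ec (H i) (H j) : ℝ) + ((Qc a b (H i) (H j) : ℝ) + (Qc b a (H i) (H j) : ℝ)) * z.re = 0 ∧
      ((Qc a b (H i) (H j) : ℝ) - (Qc b a (H i) (H j) : ℝ)) * z.im = 0 := by
    intro i j hij
    exact pair a b ha hb hab (H i) (H j) (hrmem i) (hrmem j) (hrow i j hij)
  have hcolp : ∀ k l, k ≠ l →
      Ec (fun i => H i l) (fun i => H i k) + Qc a b (fun i => H i l) (fun i => H i k)
        + Qc b a (fun i => H i l) (fun i => H i k) = 6 ∧
      (Ec (fun i => H i l) (fun i => H i k) : ℝ) + ((Qc a b (fun i => H i l) (fun i => H i k) : ℝ)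
        + (Qc b a (fun i => H i l) (fun i => H i k) : ℝ)) * z.re = 0 ∧
      ((Qc a b (fun i => H i l) (fun i => H i k) : ℝ)
        - (Qc b a (fun i => H i l) (fun i => H i k) : ℝ)) * z.im = 0 := by
    intro k l hkl
    exact pair a b ha hb hab _ _ (fun i => hmem i l) (fun i => hmem i k) (hcol k l hkl)
  -- the product identity : d * (1 - z.re) = 6 for any orthogonal pair
  have hprod : ∀ (E q r : ℕ), E + q + r = 6 → (E : ℝ) + ((q : ℝ) + r) * z.re = 0 →
      ((q + r : ℕ) : ℝ) * (1 - z.re) = 6 := by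
    intro E q r h1 h2
    have : (E : ℝ) = 6 - q - r := by
      have : (E : ℝ) + q + r = 6 := by exact_mod_cast congrArg (Nat.cast : ℕ → ℝ) h1
      linarith
    push_cast
    nlinarith [this, h2]
  -- d is constant
  have hconst : ∀ (d d' : ℕ), (d : ℝ) * (1 - z.re) = 6 → (d' : ℝ) * (1 - z.re) = 6 → d = d' := by
    intro d d' h1 h2
    have hpos : (0:ℝ) < 1 - z.re := by linarith
    have : (d : ℝ) = d' := by
      field_simp at h1 h2
      nlinarith [h1, h2]
    exact_mod_cast this
  -- constant disagreement count D
  obtain ⟨D, hDeq, hDle, hDrow, hDcol⟩ :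
      ∃ D : ℕ, (D : ℝ) * (1 - z.re) = 6 ∧ D ≤ 6 ∧
        (∀ i j, i ≠ j → Qc a b (H i) (H j) + Qc b a (H i) (H j) = D) ∧
        (∀ k l, k ≠ l → Qc a b (fun i => H i l) (fun i => H i k)
          + Qc b a (fun i => H i l) (fun i => H i k) = D) := by
    refine ⟨Qc a b (H 0) (H 1) + Qc b a (H 0) (H 1), ?_, ?_, ?_, ?_⟩
    · have h01 := hrowp 0 1 (by decide)
      have := hprod _ _ _ h01.1 h01.2.1
      push_cast at this ⊢
      linarith
    · have h01 := hrowp 0 1 (by decide)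
      omega
    · intro i j hij
      have hp := hrowp i j hij
      have h01 := hrowp 0 1 (by decide)
      exact hconst _ _ (by push_cast [hprod _ _ _ hp.1 hp.2.1] ; push_cast [hprod _ _ _ hp.1 hp.2.1] at * ; linarith [hprod _ _ _ hp.1 hp.2.1])
        (by linarith [hprod _ _ _ h01.1 h01.2.1])
    · intro k l hkl
      have hp := hcolp k l hkl
      have h01 := hrowp 0 1 (by decide)
      exact hconst _ _ (by linarith [hprod _ _ _ hp.1 hp.2.1])
        (by linarith [hprod _ _ _ h01.1 h01.2.1])
  have hEval : ∀ i j, i ≠ j → Ec (H i) (H j) + D = 6 := by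
    intro i j hij
    have := (hrowp i j hij).1
    have := hDrow i j hij
    omega
  interval_cases D
  -- D = 0
  · norm_num at hDeq
  -- D = 1
  · push_cast at hDeq
    nlinarith [hzsq, hDeq]
  -- D = 2
  · push_cast at hDeq
    nlinarith [hzsq, hDeq]
  -- D = 3 : parity argument on three rows
  · have hE3 : ∀ i j, i ≠ j → Ec (H i) (H j) = 3 := by
      intro i j hij; have := hEval i j hij; omega
    have key3 : ∀ k : Fin 6, ((if H 0 k = H 1 k then 1 else 0) : ℕ)
        + (if H 0 k = H 2 k then 1 else 0) + (if H 1 k = H 2 k then 1 else 0)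
        = 1 + 2 * (if H 0 k = H 1 k ∧ H 1 k = H 2 k then 1 else 0) := by
      intro k
      rcases hmem 0 k with h0 | h0 <;> rcases hmem 1 k with h1 | h1 <;>
        rcases hmem 2 k with h2 | h2 <;> simp [h0, h1, h2, hab, Ne.symm hab]
    have hsum : Ec (H 0) (H 1) + Ec (H 0) (H 2) + Ec (H 1) (H 2)
        = 6 + 2 * ∑ k : Fin 6, (if H 0 k = H 1 k ∧ H 1 k = H 2 k then 1 else 0) := by
      unfold Ec
      rw [Finset.card_filter, Finset.card_filter, Finset.card_filter,
        ← Finset.sum_add_distrib, ← Finset.sum_add_distrib,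
        Finset.sum_congr rfl (fun k _ => key3 k), Finset.sum_add_distrib, ← Finset.mul_sum]
      simp
    rw [hE3 0 1 (by decide), hE3 0 2 (by decide), hE3 1 2 (by decide)] at hsum
    omega
  -- D = 4 : double counting
  · have hre : z.re = -(1/2) := by push_cast at hDeq; linarith
    have him : z.im ≠ 0 := by
      intro h
      rw [h, hre] at hzsq
      norm_num at hzsq
    have hrow2 : ∀ i j, i ≠ j → Qc a b (H i) (H j) = 2 ∧ Qc b a (H i) (H j) = 2 := by
      intro i j hij
      have h1 := hDrow i j hij
      have h2 := (hrowp i j hij).2.2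
      have h3 : (Qc a b (H i) (H j) : ℝ) - (Qc b a (H i) (H j) : ℝ) = 0 := by
        rcases mul_eq_zero.mp h2 with h' | h'
        · exact h'
        · exact absurd h' him
      have h4 : Qc a b (H i) (H j) = Qc b a (H i) (H j) := by
        have : (Qc a b (H i) (H j) : ℝ) = (Qc b a (H i) (H j) : ℝ) := by linarith
        exact_mod_cast this
      omega
    have hcol2 : ∀ k l, k ≠ l → Qc a b (fun i => H i l) (fun i => H i k) = 2 ∧
        Qc b a (fun i => H i l) (fun i => H i k) = 2 := by
      intro k l hkl
      have h1 := hDcol k l hkl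
      have h2 := (hcolp k l hkl).2.2
      have h3 : (Qc a b (fun i => H i l) (fun i => H i k) : ℝ)
          - (Qc b a (fun i => H i l) (fun i => H i k) : ℝ) = 0 := by
        rcases mul_eq_zero.mp h2 with h' | h'
        · exact h'
        · exact absurd h' him
      have h4 : Qc a b (fun i => H i l) (fun i => H i k)
          = Qc b a (fun i => H i l) (fun i => H i k) := by
        have : (Qc a b (fun i => H i l) (fun i => H i k) : ℝ)
            = (Qc b a (fun i => H i l) (fun i => H i k) : ℝ) := by linarith
        exact_mod_cast this
      omega
    -- all rows have the same weight
    set w := Wc b (H 0) with hwdef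
    have hwpair : ∀ i j, i ≠ j → Wc b (H i) = Sc b (H i) (H j) + 2 ∧
        Wc b (H j) = Sc b (H i) (H j) + 2 := by
      intro i j hij
      constructor
      · rw [weight_split a b hab (H i) (H j) (hrmem j), (hrow2 i j hij).2]
      · rw [weight_split a b hab (H j) (H i) (hrmem i), Sc_symm b (H j) (H i),
          Qc_symm b a (H j) (H i), (hrow2 i j hij).1]
    have hwr : ∀ i, Wc b (H i) = w := by
      intro i
      by_cases hi : i = 0
      · rw [hi]
      · have := hwpair 0 i (Ne.symm hi)
        rw [this.2, ← this.1]
    have hS : ∀ i j, i ≠ j → Sc b (H i) (H j) + 2 = w := by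
      intro i j hij
      rw [← (hwpair i j hij).1, hwr i]
    -- all columns have the same weight, equal to w
    have hwcpair : ∀ k l, k ≠ l → Wc b (fun i => H i l) = Wc b (fun i => H i k) := by
      intro k l hkl
      rw [weight_split a b hab (fun i => H i l) (fun i => H i k) (fun i => hmem i k),
        weight_split a b hab (fun i => H i k) (fun i => H i l) (fun i => hmem i l),
        Sc_symm b (fun i => H i k) (fun i => H i l),
        Qc_symm b a (fun i => H i k) (fun i => H i l),
        (hcol2 k l hkl).2, (hcol2 k l hkl).1]
    have hwc0 : ∀ k, Wc b (fun i => H i k) = Wc b (fun i => H i 0) := by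
      intro k
      by_cases hk : k = 0
      · rw [hk]
      · exact hwcpair 0 k (Ne.symm hk)
    have htot : ∑ i : Fin 6, Wc b (H i) = ∑ k : Fin 6, Wc b (fun i => H i k) := by
      simp only [Wc_ind]
      exact Finset.sum_comm
    have hwcol : ∀ k, Wc b (fun i => H i k) = w := by
      have h1 : ∑ i : Fin 6, Wc b (H i) = 6 * w := by
        rw [Finset.sum_congr rfl (fun i _ => hwr i)]
        simp [mul_comm]
      have h2 : ∑ k : Fin 6, Wc b (fun i => H i k) = 6 * Wc b (fun i => H i 0) := by
        rw [Finset.sum_congr rfl (fun k _ => hwc0 k)]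
        simp [mul_comm]
      intro k
      rw [hwc0 k]
      omega
    -- double counting
    have hA : ∀ i : Fin 6, ∑ j : Fin 6, (Sc b (H i) (H j) + 2) = 6 * w + 2 := by
      intro i
      have : ∀ j : Fin 6, Sc b (H i) (H j) + 2 = w + (if j = i then 2 else 0) := by
        intro j
        by_cases hj : j = i
        · rw [hj, Sc_self, hwr]
          simp
        · rw [hS i j (Ne.symm hj)]
          simp [hj]
      rw [Finset.sum_congr rfl (fun j _ => this j), Finset.sum_add_distrib]
      simp [mul_comm]
    have hTA : (∑ i : Fin 6, ∑ j : Fin 6, Sc b (H i) (H j)) + 72 = 36 * w + 12 := by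
      have : ∑ i : Fin 6, ∑ j : Fin 6, (Sc b (H i) (H j) + 2) = 36 * w + 12 := by
        rw [Finset.sum_congr rfl (fun i _ => hA i)]
        simp
        ring
      rw [Finset.sum_congr rfl
        (fun i _ => Finset.sum_add_distrib (f := fun j => Sc b (H i) (H j)) (g := fun _ => 2))] at this
      rw [Finset.sum_add_distrib] at this
      simp at this
      omega
    have hTB : ∑ i : Fin 6, ∑ j : Fin 6, Sc b (H i) (H j) = 6 * (w * w) := by
      calc ∑ i : Fin 6, ∑ j : Fin 6, Sc b (H i) (H j)
          = ∑ i : Fin 6, ∑ j : Fin 6, ∑ k : Fin 6,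
              (if H i k = b then 1 else 0) * (if H j k = b then 1 else 0) := by
            exact Finset.sum_congr rfl fun i _ => Finset.sum_congr rfl fun j _ => Sc_ind b _ _
        _ = ∑ i : Fin 6, ∑ k : Fin 6, ∑ j : Fin 6,
              (if H i k = b then 1 else 0) * (if H j k = b then 1 else 0) := by
            exact Finset.sum_congr rfl fun i _ => Finset.sum_comm
        _ = ∑ k : Fin 6, ∑ i : Fin 6, ∑ j : Fin 6,
              (if H i k = b then 1 else 0) * (if H j k = b then 1 else 0) := Finset.sum_comm
        _ = ∑ k : Fin 6, (∑ i : Fin 6, (if H i k = b then 1 else 0))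
              * (∑ j : Fin 6, (if H j k = b then 1 else 0)) := by
            exact Finset.sum_congr rfl fun k _ => (Finset.sum_mul_sum _ _ _ _).symm
        _ = ∑ k : Fin 6, w * w := by
            refine Finset.sum_congr rfl fun k _ => ?_
            have := hwcol k
            rw [Wc_ind] at this
            rw [this]
        _ = 6 * (w * w) := by simp [mul_comm]
    have hwle : w ≤ 6 := by
      have : (Finset.univ.filter fun k => H 0 k = b).card ≤ (Finset.univ : Finset (Fin 6)).card :=
        Finset.card_filter_le _ _
      simpa [hwdef, Wc] using this
    rw [hTB] at hTA
    interval_cases w <;> omega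
  -- D = 5
  · have h01 := hrowp 0 1 (by decide)
    have hd5 := hDrow 0 1 (by decide)
    have hre : z.re = -(1/5) := by push_cast at hDeq; linarith
    have him : z.im ≠ 0 := by
      intro h
      rw [h, hre] at hzsq
      norm_num at hzsq
    have h3 : (Qc a b (H 0) (H 1) : ℝ) - (Qc b a (H 0) (H 1) : ℝ) = 0 := by
      rcases mul_eq_zero.mp h01.2.2 with h' | h'
      · exact h'
      · exact absurd h' him
    have h4 : Qc a b (H 0) (H 1) = Qc b a (H 0) (H 1) := by
      have : (Qc a b (H 0) (H 1) : ℝ) = (Qc b a (H 0) (H 1) : ℝ) := by linarith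
      exact_mod_cast this
    omega
  -- D = 6
  · have hE0 : ∀ i j, i ≠ j → ∀ k, H i k ≠ H j k := by
      intro i j hij k hk
      have hE : Ec (H i) (H j) = 0 := by have := hEval i j hij; omega
      unfold Ec at hE
      have : k ∈ Finset.univ.filter fun k => H i k = H j k := by
        simp [hk]
      rw [Finset.card_eq_zero.mp hE] at this
      exact absurd this (Finset.notMem_empty k)
    have h01 := hE0 0 1 (by decide) 0
    have h02 := hE0 0 2 (by decide) 0
    have h12 := hE0 1 2 (by decide) 0
    rcases hmem 0 0 with h0 | h0 <;> rcases hmem 1 0 with h1 | h1 <;>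
      rcases hmem 2 0 with h2 | h2 <;>
      first
      | exact h01 (h0.trans h1.symm)
      | exact h02 (h0.trans h2.symm)
      | exact h12 (h1.trans h2.symm)


theorem stmt_6 :
    ¬ ∃ H : Matrix (Fin 6) (Fin 6) ℂ,
      (∀ i j, ‖H i j‖ = 1) ∧
      H * H.conjTranspose = (6 : ℂ) • 1 ∧
      (Finset.univ.image fun p : Fin 6 × Fin 6 => H p.1 p.2).card = 2 := by
  rintro ⟨H, h1, h2, h3⟩
  obtain ⟨a, b, hab, hset⟩ := Finset.card_eq_two.mp h3
  have hmem : ∀ i j, H i j = a ∨ H i j = b := by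
    intro i j
    have : H i j ∈ (Finset.univ.image fun p : Fin 6 × Fin 6 => H p.1 p.2) :=
      Finset.mem_image.mpr ⟨(i, j), Finset.mem_univ _, rfl⟩
    rw [hset] at this
    simpa using this
  have ha : ‖a‖ = 1 := by
    have : a ∈ (Finset.univ.image fun p : Fin 6 × Fin 6 => H p.1 p.2) := by
      rw [hset]; simp
    obtain ⟨p, _, hp⟩ := Finset.mem_image.mp this
    rw [← hp]; exact h1 p.1 p.2
  have hb : ‖b‖ = 1 := by
    have : b ∈ (Finset.univ.image fun p : Fin 6 × Fin 6 => H p.1 p.2) := by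
      rw [hset]; simp
    obtain ⟨p, _, hp⟩ := Finset.mem_image.mp this
    rw [← hp]; exact h1 p.1 p.2
  have hrow : ∀ i j, i ≠ j → ∑ k, H i k * (starRingEnd ℂ) (H j k) = 0 := by
    intro i j hij
    have := congrFun (congrFun h2 i) j
    simpa [Matrix.mul_apply, Matrix.conjTranspose_apply, Matrix.smul_apply,
      Matrix.one_apply_ne hij] using this
  have h6 : (6 : ℂ) ≠ 0 := by norm_num
  have hinv : H * ((6 : ℂ)⁻¹ • H.conjTranspose) = 1 := by
    rw [Matrix.mul_smul, h2, smul_smul, inv_mul_cancel₀ h6, one_smul]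
  have hcomm : ((6 : ℂ)⁻¹ • H.conjTranspose) * H = 1 := mul_eq_one_comm.mp hinv
  have hct : H.conjTranspose * H = (6 : ℂ) • 1 := by
    rw [Matrix.smul_mul] at hcomm
    calc H.conjTranspose * H = (6 : ℂ) • ((6 : ℂ)⁻¹ • (H.conjTranspose * H)) := by
          rw [smul_smul, mul_inv_cancel₀ h6, one_smul]
      _ = (6 : ℂ) • 1 := by rw [hcomm]
  have hcol : ∀ k l, k ≠ l → ∑ i, H i l * (starRingEnd ℂ) (H i k) = 0 := by
    intro k l hkl
    have := congrFun (congrFun hct k) l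
    simp [Matrix.mul_apply, Matrix.conjTranspose_apply, Matrix.smul_apply,
      Matrix.one_apply_ne hkl] at this
    simpa [mul_comm] using this
  exact key H a b ha hb hab hmem hrow hcol
end

section
/- There is no 6×6 complex Hadamard matrix containing a 3×3 submatrix all of whose entries are equal (equivalently, a 3×3 rank-one submatrix with constant unimodular ratios cannot occur as specified: if three rows of a 6×6 CHM agree up to a unimodular scalar on three common columns, a contradiction arises). Precisely: there do not exist a 6×6 matrix H with unimodular entries satisfying H·H* = 6·I, three distinct row indices r₁, r₂, r₃, three distinct column indices c₁, c₂, c₃, and unimodular scalars λ₂, λ₃ such that H(r₂, cⱼ) = λ₂·H(r₁, cⱼ) and H(r₃, cⱼ) = λ₃·H(r₁, cⱼ) for j = 1, 2, 3. -/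
open Finset Complex

theorem stmt_11 :
    ¬ ∃ (H : Matrix (Fin 6) (Fin 6) ℂ) (r₁ r₂ r₃ c₁ c₂ c₃ : Fin 6) (l₂ l₃ : ℂ),
      (∀ i j, ‖H i j‖ = 1) ∧
      H * H.conjTranspose = (6 : ℂ) • 1 ∧
      r₁ ≠ r₂ ∧ r₁ ≠ r₃ ∧ r₂ ≠ r₃ ∧
      c₁ ≠ c₂ ∧ c₁ ≠ c₃ ∧ c₂ ≠ c₃ ∧
      ‖l₂‖ = 1 ∧ ‖l₃‖ = 1 ∧
      (∀ c ∈ ({c₁, c₂, c₃} : Set (Fin 6)), H r₂ c = l₂ * H r₁ c ∧ H r₃ c = l₃ * H r₁ c) := by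
  rintro ⟨H, r₁, r₂, r₃, c₁, c₂, c₃, l₂, l₃, h1, h2, hr12, hr13, hr23, hc12, hc13, hc23,
    hl2, hl3, hscale⟩
  -- unimodularity facts
  have unit : ∀ i j, H i j * starRingEnd ℂ (H i j) = 1 := by
    intro i j
    rw [Complex.mul_conj, Complex.normSq_eq_norm_sq, h1]
    norm_num
  have ul2 : l₂ * starRingEnd ℂ l₂ = 1 := by
    rw [Complex.mul_conj, Complex.normSq_eq_norm_sq, hl2]; norm_num
  have ul3 : l₃ * starRingEnd ℂ l₃ = 1 := by
    rw [Complex.mul_conj, Complex.normSq_eq_norm_sq, hl3]; norm_num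
  -- orthogonality
  have orth : ∀ i j : Fin 6, ∑ c : Fin 6, H i c * starRingEnd ℂ (H j c)
      = if i = j then 6 else 0 := by
    intro i j
    have := congrFun (congrFun h2 i) j
    simp [Matrix.mul_apply, Matrix.conjTranspose_apply, Matrix.one_apply,
      Matrix.smul_apply] at this
    rw [this]
  set S : Finset (Fin 6) := {c₁, c₂, c₃} with hS
  have hmemS : ∀ c ∈ S, H r₂ c = l₂ * H r₁ c ∧ H r₃ c = l₃ * H r₁ c := by
    intro c hc
    apply hscale
    simp only [hS, Finset.mem_insert, Finset.mem_singleton] at hc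
    simp [hc]
  have hcard : S.card = 3 := by
    rw [hS]
    rw [Finset.card_insert_of_notMem (by simp [hc12, hc13]),
      Finset.card_insert_of_notMem (by simp [hc23])]
    simp
  have hcardc : Sᶜ.card = 3 := by
    rw [Finset.card_compl, hcard]; simp
  -- sum over S of H r₁ c * conj (H rₖ c)
  have sumS : ∀ (r : Fin 6) (l : ℂ), (∀ c ∈ S, H r c = l * H r₁ c) →
      ∑ c ∈ S, H r₁ c * starRingEnd ℂ (H r c) = 3 * starRingEnd ℂ l := by
    intro r l hr
    have : ∀ c ∈ S, H r₁ c * starRingEnd ℂ (H r c) = starRingEnd ℂ l := by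
      intro c hc
      rw [hr c hc, map_mul]
      have := unit r₁ c
      have hu := unit r₁ c
      ring_nf
      linear_combination (starRingEnd ℂ l) * hu
    rw [Finset.sum_congr rfl this, Finset.sum_const, hcard]
    ring
  -- hence sum over complement = -3 conj l
  have sumSc : ∀ (r : Fin 6) (l : ℂ), r₁ ≠ r → (∀ c ∈ S, H r c = l * H r₁ c) →
      ∑ c ∈ Sᶜ, H r₁ c * starRingEnd ℂ (H r c) = -3 * starRingEnd ℂ l := by
    intro r l hne hr
    have htot := orth r₁ r
    rw [if_neg hne] at htot
    rw [← Finset.sum_add_sum_compl S] at htot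
    rw [sumS r l hr] at htot
    linear_combination htot
  -- pointwise on complement: H r c = - l * H r₁ c
  have comp : ∀ (r : Fin 6) (l : ℂ), r₁ ≠ r → ‖l‖ = 1 →
      (∀ c ∈ S, H r c = l * H r₁ c) → ∀ c ∈ Sᶜ, H r c = -(l * H r₁ c) := by
    intro r l hne hlabs hr
    have hul : l * starRingEnd ℂ l = 1 := by
      rw [Complex.mul_conj, Complex.normSq_eq_norm_sq, hlabs]; norm_num
    have hzero : ∑ c ∈ Sᶜ, Complex.normSq (H r c + l * H r₁ c) = 0 := by
      have expand : ∀ c ∈ Sᶜ, Complex.normSq (H r c + l * H r₁ c)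
          = 2 + 2 * (H r c * starRingEnd ℂ (l * H r₁ c)).re := by
        intro c _
        rw [Complex.normSq_add]
        have h1' : Complex.normSq (H r c) = 1 := by
          rw [Complex.normSq_eq_norm_sq, h1]; norm_num
        have h2' : Complex.normSq (l * H r₁ c) = 1 := by
          rw [Complex.normSq_mul, Complex.normSq_eq_norm_sq, Complex.normSq_eq_norm_sq, h1, hlabs]
          norm_num
        rw [h1', h2']; ring
      rw [Finset.sum_congr rfl expand, Finset.sum_add_distrib, Finset.sum_const, hcardc,
        ← Finset.mul_sum, ← Complex.re_sum]
      have key : ∑ c ∈ Sᶜ, H r c * starRingEnd ℂ (l * H r₁ c) = -3 := by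
        have : ∑ c ∈ Sᶜ, H r c * starRingEnd ℂ (l * H r₁ c)
            = starRingEnd ℂ l * starRingEnd ℂ (∑ c ∈ Sᶜ, H r₁ c * starRingEnd ℂ (H r c)) := by
          rw [map_sum, Finset.mul_sum]
          apply Finset.sum_congr rfl
          intro c _
          rw [map_mul, map_mul, Complex.conj_conj]
          ring
        rw [this, sumSc r l hne hr]
        have h3 : (starRingEnd ℂ) ((-3 : ℂ) * starRingEnd ℂ l) = -3 * l := by
          rw [map_mul, Complex.conj_conj]
          norm_num [Complex.ext_iff]
        rw [h3]
        linear_combination -3 * hul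
      rw [key]
      norm_num
    intro c hc
    have := (Finset.sum_eq_zero_iff_of_nonneg (fun c _ => Complex.normSq_nonneg _)).mp hzero c hc
    have := Complex.normSq_eq_zero.mp this
    linear_combination this
  -- apply to rows r₂ and r₃
  have comp2 := comp r₂ l₂ hr12 hl2 (fun c hc => (hmemS c hc).1)
  have comp3 := comp r₃ l₃ hr13 hl3 (fun c hc => (hmemS c hc).2)
  -- orthogonality of rows r₂ r₃ gives contradiction
  have htot := orth r₂ r₃
  rw [if_neg hr23, ← Finset.sum_add_sum_compl S] at htot
  have e1 : ∑ c ∈ S, H r₂ c * starRingEnd ℂ (H r₃ c) = 3 * (l₂ * starRingEnd ℂ l₃) := by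
    have : ∀ c ∈ S, H r₂ c * starRingEnd ℂ (H r₃ c) = l₂ * starRingEnd ℂ l₃ := by
      intro c hc
      rw [(hmemS c hc).1, (hmemS c hc).2, map_mul]
      have hu := unit r₁ c
      linear_combination (l₂ * starRingEnd ℂ l₃) * hu
    rw [Finset.sum_congr rfl this, Finset.sum_const, hcard]
    ring
  have e2 : ∑ c ∈ Sᶜ, H r₂ c * starRingEnd ℂ (H r₃ c) = 3 * (l₂ * starRingEnd ℂ l₃) := by
    have : ∀ c ∈ Sᶜ, H r₂ c * starRingEnd ℂ (H r₃ c) = l₂ * starRingEnd ℂ l₃ := by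
      intro c hc
      rw [comp2 c hc, comp3 c hc, map_neg, map_mul]
      have hu := unit r₁ c
      linear_combination (l₂ * starRingEnd ℂ l₃) * hu
    rw [Finset.sum_congr rfl this, Finset.sum_const, hcardc]
    ring
  rw [e1, e2] at htot
  have : l₂ * starRingEnd ℂ l₃ = 0 := by linear_combination htot / 6
  have habs := congrArg (‖·‖) this
  rw [norm_mul, hl2, Complex.norm_conj, hl3] at habs
  norm_num at habs
end
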